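/- Let (λ_n) be a uniform stick-breaking process on [0,T]. For any measurable f : [0,T] → [0,∞], one has Σ_{n=1}^∞ E[f(λ_n)] = ∫_0^T f(t)/t dt. -/

import Mathlib

open MeasureTheory ProbabilityTheory Real Set ENNReal

lemma sb_map_mul (s : ℝ) (hs : 0 < s) :
    Measure.map (fun u : ℝ => s * u) (volume.restrict (Ioo (0:ℝ) 1))
      = (ENNReal.ofReal s)⁻¹ • volume.restrict (Ioo (0:ℝ) s) := by
  have hpre : (fun u : ℝ => s * u) ⁻¹' (Ioo 0 s) = Ioo (0:ℝ) 1 := by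
    rw [preimage_const_mul_Ioo₀ _ _ hs, zero_div, div_self hs.ne']
  calc Measure.map (fun u : ℝ => s * u) (volume.restrict (Ioo (0:ℝ) 1))
      = Measure.map (fun u : ℝ => s * u)
          (volume.restrict ((fun u : ℝ => s * u) ⁻¹' (Ioo 0 s))) := by rw [hpre]
    _ = (volume.map (fun u : ℝ => s * u)).restrict (Ioo 0 s) :=
        (Measure.restrict_map (measurable_const_mul s) measurableSet_Ioo).symm
    _ = (ENNReal.ofReal |s⁻¹| • volume).restrict (Ioo 0 s) := by
        rw [Real.map_volume_mul_left hs.ne']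
    _ = (ENNReal.ofReal s)⁻¹ • volume.restrict (Ioo (0:ℝ) s) := by
        rw [Measure.restrict_smul, abs_of_pos (inv_pos.2 hs),
          ENNReal.ofReal_inv_of_pos hs]

lemma sb_scale (g : ℝ → ℝ≥0∞) (hg : Measurable g) (s : ℝ) (hs : 0 < s) :
    ∫⁻ u in Ioo (0:ℝ) 1, g (s * u) = (ENNReal.ofReal s)⁻¹ * ∫⁻ t in Ioo (0:ℝ) s, g t := by
  rw [← lintegral_map hg (measurable_const_mul s), sb_map_mul s hs, lintegral_smul_measure, smul_eq_mul]

lemma sb_one_sub (g : ℝ → ℝ≥0∞) (hg : Measurable g) :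
    ∫⁻ u in Ioo (0:ℝ) 1, g (1 - u) = ∫⁻ u in Ioo (0:ℝ) 1, g u := by
  have hmeas : Measurable (fun u : ℝ => 1 - u) := measurable_const.sub measurable_id
  have hpre : (fun u : ℝ => 1 - u) ⁻¹' (Ioo 0 1) = Ioo (0:ℝ) 1 := by
    ext u; simp only [mem_preimage, mem_Ioo]
    constructor <;> rintro ⟨a, b⟩ <;> constructor <;> linarith
  have hmp : Measure.map (fun u : ℝ => 1 - u) volume = volume :=
    (Measure.measurePreserving_sub_left volume 1).map_eq
  have hres : Measure.map (fun u : ℝ => 1 - u) (volume.restrict (Ioo (0:ℝ) 1))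
      = volume.restrict (Ioo (0:ℝ) 1) := by
    conv_lhs => rw [← hpre]
    rw [← Measure.restrict_map hmeas measurableSet_Ioo, hmp]
  calc ∫⁻ u in Ioo (0:ℝ) 1, g (1 - u)
      = ∫⁻ v, g v ∂(Measure.map (fun u : ℝ => 1 - u) (volume.restrict (Ioo (0:ℝ) 1))) :=
        (lintegral_map hg hmeas).symm
    _ = ∫⁻ u in Ioo (0:ℝ) 1, g u := by rw [hres]

noncomputable def sbPhi (f : ℝ → ℝ≥0∞) (s : ℝ) : ℝ≥0∞ :=
  ∫⁻ t in Ioc (0:ℝ) s, f t / ENNReal.ofReal t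

lemma sbPhi_mono (f : ℝ → ℝ≥0∞) : Monotone (sbPhi f) := fun a b hab =>
  lintegral_mono_set (Ioc_subset_Ioc_right hab)

lemma sbPhi_measurable (f : ℝ → ℝ≥0∞) : Measurable (sbPhi f) :=
  (sbPhi_mono f).measurable

lemma sbPhi_le (f : ℝ → ℝ≥0∞) (m : ℝ≥0∞) (ε : ℝ)
    (hfm : ∀ t, f t ≤ m) (hf0 : ∀ t, t ≤ ε → f t = 0) (s : ℝ) :
    sbPhi f s ≤ m * (ENNReal.ofReal ε)⁻¹ * ENNReal.ofReal s := by
  have h : ∀ t ∈ Ioc (0:ℝ) s, f t / ENNReal.ofReal t ≤ m * (ENNReal.ofReal ε)⁻¹ := by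
    intro t ht
    by_cases hft : f t = 0
    · simp [hft, ENNReal.div_eq_top]
    · have hεt : ε < t := by
        by_contra hc
        exact hft (hf0 t (not_lt.1 hc))
      rw [ENNReal.div_eq_inv_mul, mul_comm]
      exact mul_le_mul' (hfm t)
        (ENNReal.inv_le_inv.2 (ENNReal.ofReal_le_ofReal hεt.le))
  calc sbPhi f s ≤ ∫⁻ _ in Ioc (0:ℝ) s, m * (ENNReal.ofReal ε)⁻¹ :=
        setLIntegral_mono (measurable_const) h
    _ = m * (ENNReal.ofReal ε)⁻¹ * ENNReal.ofReal s := by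
        rw [setLIntegral_const, Real.volume_Ioc, sub_zero]

lemma sbPhi_key (f : ℝ → ℝ≥0∞) (hf : Measurable f) {s : ℝ} (hs : 0 < s) :
    sbPhi f s = (ENNReal.ofReal s)⁻¹ * (∫⁻ t in Ioc (0:ℝ) s, f t)
      + (ENNReal.ofReal s)⁻¹ * ∫⁻ v in Ioo (0:ℝ) s, sbPhi f v := by
  set G : ℝ → ℝ≥0∞ := (Ioi (0:ℝ)).indicator (fun t => f t / ENNReal.ofReal t) with hG_def
  have hG : Measurable G :=
    (hf.div (ENNReal.measurable_ofReal.comp measurable_id)).indicator measurableSet_Ioi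
  have hC : (∫⁻ v in Ioo (0:ℝ) s, sbPhi f v)
      = ∫⁻ t in Ioc (0:ℝ) s, (f t / ENNReal.ofReal t) * ENNReal.ofReal (s - t) := by
    have h1 : ∀ v : ℝ, sbPhi f v = ∫⁻ t, G t * (Ici t).indicator 1 v := by
      intro v
      rw [sbPhi, ← lintegral_indicator measurableSet_Ioc]
      refine lintegral_congr fun t => ?_
      by_cases h1 : 0 < t <;> by_cases h2 : t ≤ v <;>
        simp [hG_def, indicator, h1, h2, mem_Ioc, mem_Ioi, mem_Ici]
    calc (∫⁻ v in Ioo (0:ℝ) s, sbPhi f v)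
        = ∫⁻ v in Ioo (0:ℝ) s, ∫⁻ t, G t * (Ici t).indicator 1 v := by
          exact lintegral_congr fun v => h1 v
      _ = ∫⁻ t, ∫⁻ v in Ioo (0:ℝ) s, G t * (Ici t).indicator 1 v := by
          apply lintegral_lintegral_swap
          have heq : (Function.uncurry fun (x y : ℝ) => G y * (Ici y).indicator 1 x)
              = fun p : ℝ × ℝ => G p.2 * ({q : ℝ × ℝ | q.2 ≤ q.1}).indicator 1 p := by
            funext p
            by_cases h : p.2 ≤ p.1 <;> simp [Function.uncurry, indicator, h, mem_Ici]
          rw [heq]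
          exact ((hG.comp measurable_snd).mul
            ((measurable_const.indicator (measurableSet_le measurable_snd measurable_fst)))).aemeasurable
      _ = ∫⁻ t, G t * volume (Ici t ∩ Ioo 0 s) := by
          refine lintegral_congr fun t => ?_
          have hiv : ∀ v : ℝ, G t * (Ici t).indicator 1 v
              = (Ici t).indicator (fun _ => G t) v := by
            intro v; by_cases h : v ∈ Ici t <;> simp [indicator, h]
          simp_rw [hiv]
          rw [lintegral_indicator measurableSet_Ici, setLIntegral_const,
            Measure.restrict_apply measurableSet_Ici]
      _ = ∫⁻ t, (Ioc (0:ℝ) s).indicator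
            (fun t => (f t / ENNReal.ofReal t) * ENNReal.ofReal (s - t)) t := by
          refine lintegral_congr fun t => ?_
          rcases le_or_gt t 0 with h0 | h0
          · have : G t = 0 := by simp [hG_def, indicator, not_lt.2 h0, mem_Ioi]
            simp [this, indicator, mem_Ioc, not_lt.2 h0]
          · rcases le_or_gt t s with h1 | h1
            · have hset : Ici t ∩ Ioo 0 s = Ico t s := by
                ext x; simp only [mem_inter_iff, mem_Ici, mem_Ioo, mem_Ico]
                constructor
                · rintro ⟨a, _, c⟩; exact ⟨a, c⟩
                · rintro ⟨a, b⟩; exact ⟨a, lt_of_lt_of_le h0 a, b⟩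
              simp [hG_def, indicator, mem_Ioi, h0, mem_Ioc, h1, hset, Real.volume_Ico]
            · have hset : Ici t ∩ Ioo 0 s = ∅ := by
                ext x; simp only [mem_inter_iff, mem_Ici, mem_Ioo, mem_empty_iff_false,
                  iff_false, not_and]
                intro hx h0x; linarith
              simp [indicator, mem_Ioc, not_le.2 h1, hset]
      _ = ∫⁻ t in Ioc (0:ℝ) s, (f t / ENNReal.ofReal t) * ENNReal.ofReal (s - t) :=
          lintegral_indicator measurableSet_Ioc _
  have hmul : ENNReal.ofReal s * sbPhi f s
      = (∫⁻ t in Ioc (0:ℝ) s, f t) + ∫⁻ v in Ioo (0:ℝ) s, sbPhi f v := by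
    rw [hC, sbPhi, ← lintegral_const_mul _ (f := fun t => f t / ENNReal.ofReal t) (hf.div ENNReal.measurable_ofReal),
      ← lintegral_add_left hf]
    refine setLIntegral_congr_fun measurableSet_Ioc ?_
    intro t ht
    obtain ⟨ht0, hts⟩ := ht
    have hne0 : ENNReal.ofReal t ≠ 0 := (ENNReal.ofReal_pos.2 ht0).ne'
    have hkey : ENNReal.ofReal s * (ENNReal.ofReal t)⁻¹
        = 1 + (ENNReal.ofReal t)⁻¹ * ENNReal.ofReal (s - t) := by
      have hsplit : ENNReal.ofReal s = ENNReal.ofReal t + ENNReal.ofReal (s - t) := by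
        rw [← ENNReal.ofReal_add ht0.le (by linarith)]
        ring_nf
      rw [hsplit, add_mul, ENNReal.mul_inv_cancel hne0 ENNReal.ofReal_ne_top, mul_comm]
    calc ENNReal.ofReal s * (f t / ENNReal.ofReal t)
        = f t * (ENNReal.ofReal s * (ENNReal.ofReal t)⁻¹) := by
          rw [ENNReal.div_eq_inv_mul]; ring
      _ = f t * (1 + (ENNReal.ofReal t)⁻¹ * ENNReal.ofReal (s - t)) := by rw [hkey]
      _ = f t + f t / ENNReal.ofReal t * ENNReal.ofReal (s - t) := by
          rw [mul_add, mul_one, ENNReal.div_eq_inv_mul]; ring_nf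
  have hne0 : ENNReal.ofReal s ≠ 0 := (ENNReal.ofReal_pos.2 hs).ne'
  calc sbPhi f s = (ENNReal.ofReal s)⁻¹ * (ENNReal.ofReal s * sbPhi f s) := by
        rw [← mul_assoc, ENNReal.inv_mul_cancel hne0 ENNReal.ofReal_ne_top, one_mul]
    _ = _ := by rw [hmul, mul_add]

section Prob
variable {Ω : Type*} [MeasurableSpace Ω] (μ : Measure Ω) [IsProbabilityMeasure μ]
  (T : ℝ) (U : ℕ → Ω → ℝ) (L : ℕ → Ω → ℝ)

lemma sb_L_meas (hUmeas : ∀ n, Measurable (U n)) (hL0 : ∀ ω, L 0 ω = T)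
    (hL : ∀ n ω, L (n + 1) ω = U (n + 1) ω * L n ω) (n : ℕ) : Measurable (L n) := by
  induction n with
  | zero =>
    have : L 0 = fun _ => T := funext hL0
    rw [this]; exact measurable_const
  | succ k ih =>
    have : L (k + 1) = fun ω => U (k + 1) ω * L k ω := funext (hL k)
    rw [this]; exact (hUmeas (k + 1)).mul ih

lemma sb_L_eq (hL0 : ∀ ω, L 0 ω = T)
    (hL : ∀ n ω, L (n + 1) ω = U (n + 1) ω * L n ω) (n : ℕ) :
    L n = fun ω => T * ∏ i ∈ Finset.Icc 1 n, U i ω := by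
  induction n with
  | zero => funext ω; simp [hL0 ω]
  | succ k ih =>
    funext ω
    rw [hL k ω, ih]
    rw [Finset.prod_Icc_succ_top (Nat.le_add_left 1 k)]
    ring

lemma sb_indep (hUmeas : ∀ n, Measurable (U n))
    (hUindep : iIndepFun U μ)
    (hL0 : ∀ ω, L 0 ω = T) (hL : ∀ n ω, L (n + 1) ω = U (n + 1) ω * L n ω) (n : ℕ) :
    IndepFun (L n) (U (n + 1)) μ := by
  set S : Finset ℕ := Finset.Icc 1 n with hS
  have hdisj : Disjoint S ({n + 1} : Finset ℕ) := by
    simp only [Finset.disjoint_singleton_right, hS, Finset.mem_Icc]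
    omega
  have h1 : IndepFun (fun ω (i : S) => U i ω) (fun ω (i : ({n + 1} : Finset ℕ)) => U i ω) μ :=
    hUindep.indepFun_finset S {n + 1} hdisj hUmeas
  have hφ : Measurable (fun v : S → ℝ => T * ∏ i, v i) :=
    measurable_const.mul (Finset.measurable_prod Finset.univ fun i _ => measurable_pi_apply i)
  have hψ : Measurable (fun v : ({n + 1} : Finset ℕ) → ℝ =>
      v ⟨n + 1, Finset.mem_singleton_self _⟩) := measurable_pi_apply _
  have h2 := h1.comp hφ hψ
  have he1 : ((fun v : S → ℝ => T * ∏ i, v i) ∘ (fun ω (i : S) => U i ω)) = L n := by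
    funext ω
    rw [sb_L_eq T U L hL0 hL n]
    simp only [Function.comp_apply]
    rw [← Finset.prod_coe_sort S (fun i => U i ω)]
  have he2 : ((fun v : ({n + 1} : Finset ℕ) → ℝ => v ⟨n + 1, Finset.mem_singleton_self _⟩) ∘
      (fun ω (i : ({n + 1} : Finset ℕ)) => U i ω)) = U (n + 1) := rfl
  rwa [he1, he2] at h2

lemma sb_law (hUmeas : ∀ n, Measurable (U n))
    (hUindep : iIndepFun U μ)
    (hUunif : ∀ n, μ.map (U n) = volume.restrict (Set.Ioo (0 : ℝ) 1))
    (hL0 : ∀ ω, L 0 ω = T) (hL : ∀ n ω, L (n + 1) ω = U (n + 1) ω * L n ω) (n : ℕ)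
    (g : ℝ × ℝ → ℝ≥0∞) (hg : Measurable g) :
    ∫⁻ ω, g (L n ω, U (n + 1) ω) ∂μ
      = ∫⁻ s, (∫⁻ u in Ioo (0:ℝ) 1, g (s, u)) ∂(μ.map (L n)) := by
  have hLmeas := sb_L_meas T U L hUmeas hL0 hL n
  have hmap : μ.map (fun ω => (L n ω, U (n + 1) ω)) = (μ.map (L n)).prod (μ.map (U (n + 1))) :=
    (indepFun_iff_map_prod_eq_prod_map_map hLmeas.aemeasurable
      (hUmeas (n + 1)).aemeasurable).mp (sb_indep μ T U L hUmeas hUindep hL0 hL n)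
  calc ∫⁻ ω, g (L n ω, U (n + 1) ω) ∂μ
      = ∫⁻ p, g p ∂(μ.map (fun ω => (L n ω, U (n + 1) ω))) :=
        (lintegral_map hg (hLmeas.prodMk (hUmeas (n + 1)))).symm
    _ = ∫⁻ p, g p ∂((μ.map (L n)).prod (volume.restrict (Ioo (0:ℝ) 1))) := by
        rw [hmap, hUunif]
    _ = ∫⁻ s, (∫⁻ u in Ioo (0:ℝ) 1, g (s, u)) ∂(μ.map (L n)) :=
        lintegral_prod _ hg.aemeasurable

lemma sb_good (hUmeas : ∀ n, Measurable (U n))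
    (hUunif : ∀ n, μ.map (U n) = volume.restrict (Set.Ioo (0 : ℝ) 1)) :
    ∀ᵐ ω ∂μ, ∀ k, U k ω ∈ Ioo (0:ℝ) 1 := by
  rw [ae_all_iff]
  intro k
  have h0 : μ (U k ⁻¹' (Ioo (0:ℝ) 1)ᶜ) = 0 := by
    rw [← Measure.map_apply (hUmeas k) measurableSet_Ioo.compl, hUunif k,
      Measure.restrict_apply measurableSet_Ioo.compl, compl_inter_self]
    simp
  rw [ae_iff]
  convert h0 using 2
  rfl

end Prob

lemma sb_L_pos {Ω : Type*} (T : ℝ) (hT : 0 < T) (U : ℕ → Ω → ℝ) (L : ℕ → Ω → ℝ)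
    (hL0 : ∀ ω, L 0 ω = T) (hL : ∀ n ω, L (n + 1) ω = U (n + 1) ω * L n ω)
    (ω : Ω) (hω : ∀ k, U k ω ∈ Ioo (0:ℝ) 1) (n : ℕ) : 0 < L n ω ∧ L n ω ≤ T := by
  induction n with
  | zero => rw [hL0]; exact ⟨hT, le_rfl⟩
  | succ k ih =>
    obtain ⟨h1, h2⟩ := ih
    obtain ⟨hu1, hu2⟩ := hω (k + 1)
    rw [hL k ω]
    exact ⟨mul_pos hu1 h1, by nlinarith⟩

lemma sb_core {Ω : Type*} [MeasurableSpace Ω] (μ : Measure Ω) [IsProbabilityMeasure μ]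
    (T : ℝ) (hT : 0 < T)
    (U : ℕ → Ω → ℝ) (hUmeas : ∀ n, Measurable (U n))
    (hUindep : iIndepFun U μ)
    (hUunif : ∀ n, μ.map (U n) = volume.restrict (Set.Ioo (0 : ℝ) 1))
    (L : ℕ → Ω → ℝ) (hL0 : ∀ ω, L 0 ω = T)
    (hL : ∀ n ω, L (n + 1) ω = U (n + 1) ω * L n ω)
    (lam : ℕ → Ω → ℝ) (hlam : ∀ n ω, lam (n + 1) ω = L n ω - L (n + 1) ω)
    (f : ℝ → ℝ≥0∞) (hf : Measurable f)
    (ε : ℝ) (hε : 0 < ε) (m : ℝ≥0∞) (hm : m ≠ ∞)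
    (hfm : ∀ t, f t ≤ m) (hf0 : ∀ t, t ≤ ε → f t = 0) :
    ∑' n : ℕ, ∫⁻ ω, f (lam (n + 1) ω) ∂μ = sbPhi f T := by
  have hLmeas : ∀ n, Measurable (L n) := sb_L_meas T U L hUmeas hL0 hL
  have hgood := sb_good μ U hUmeas hUunif
  have hLpos : ∀ n, ∀ᵐ ω ∂μ, 0 < L n ω ∧ L n ω ≤ T := by
    intro n
    filter_upwards [hgood] with ω hω
    exact sb_L_pos T hT U L hL0 hL ω hω n
  -- measurability of auxiliary functions of s
  have hmB : Measurable fun s : ℝ => ∫⁻ t in Ioc (0:ℝ) s, f t := by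
    have hmono : Monotone fun s : ℝ => ∫⁻ t in Ioc (0:ℝ) s, f t :=
      fun a b hab => lintegral_mono_set (Ioc_subset_Ioc_right hab)
    exact hmono.measurable
  have hmC : Measurable fun s : ℝ => ∫⁻ v in Ioo (0:ℝ) s, sbPhi f v := by
    have hmono : Monotone fun s : ℝ => ∫⁻ v in Ioo (0:ℝ) s, sbPhi f v :=
      fun a b hab => lintegral_mono_set (Ioo_subset_Ioo_right hab)
    exact hmono.measurable
  have hminv : Measurable fun s : ℝ => (ENNReal.ofReal s)⁻¹ :=
    ENNReal.measurable_ofReal.inv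
  -- the one-step identity
  have key : ∀ n, ∫⁻ ω, sbPhi f (L n ω) ∂μ
      = (∫⁻ ω, f (lam (n + 1) ω) ∂μ) + ∫⁻ ω, sbPhi f (L (n + 1) ω) ∂μ := by
    intro n
    set ν := μ.map (L n) with hν
    have hae : ∀ᵐ s ∂ν, 0 < s := by
      rw [hν, ae_map_iff (hLmeas n).aemeasurable (measurableSet_Ioi : MeasurableSet (Ioi (0:ℝ)))]
      exact (hLpos n).mono fun ω h => h.1
    have A3 : ∫⁻ ω, sbPhi f (L n ω) ∂μ = ∫⁻ s, sbPhi f s ∂ν :=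
      (lintegral_map (sbPhi_measurable f) (hLmeas n)).symm
    have A1 : ∫⁻ ω, f (lam (n + 1) ω) ∂μ
        = ∫⁻ s, ((ENNReal.ofReal s)⁻¹ * ∫⁻ t in Ioc (0:ℝ) s, f t) ∂ν := by
      have h1 : ∀ ω, f (lam (n + 1) ω)
          = (fun p : ℝ × ℝ => f ((1 - p.2) * p.1)) (L n ω, U (n + 1) ω) := by
        intro ω; simp only
        congr 1
        rw [hlam n ω, hL n ω]; ring
      rw [lintegral_congr h1,
        sb_law μ T U L hUmeas hUindep hUunif hL0 hL n
          (fun p : ℝ × ℝ => f ((1 - p.2) * p.1))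
          (hf.comp ((measurable_const.sub measurable_snd).mul measurable_fst))]
      refine lintegral_congr_ae (hae.mono fun s hs => ?_)
      calc ∫⁻ u in Ioo (0:ℝ) 1, f ((1 - u) * s)
          = ∫⁻ u in Ioo (0:ℝ) 1, (fun v => f (s * v)) (1 - u) := by
            refine lintegral_congr fun u => by rw [mul_comm]
        _ = ∫⁻ u in Ioo (0:ℝ) 1, f (s * u) :=
            sb_one_sub _ (hf.comp (measurable_const_mul s))
        _ = (ENNReal.ofReal s)⁻¹ * ∫⁻ t in Ioo (0:ℝ) s, f t := sb_scale f hf s hs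
        _ = (ENNReal.ofReal s)⁻¹ * ∫⁻ t in Ioc (0:ℝ) s, f t := by
            rw [setLIntegral_congr (Ioo_ae_eq_Ioc (a := (0:ℝ)) (b := s))]
    have A2 : ∫⁻ ω, sbPhi f (L (n + 1) ω) ∂μ
        = ∫⁻ s, ((ENNReal.ofReal s)⁻¹ * ∫⁻ v in Ioo (0:ℝ) s, sbPhi f v) ∂ν := by
      have h1 : ∀ ω, sbPhi f (L (n + 1) ω)
          = (fun p : ℝ × ℝ => sbPhi f (p.2 * p.1)) (L n ω, U (n + 1) ω) := by
        intro ω; simp only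
        rw [hL n ω]
      rw [lintegral_congr h1,
        sb_law μ T U L hUmeas hUindep hUunif hL0 hL n
          (fun p : ℝ × ℝ => sbPhi f (p.2 * p.1))
          ((sbPhi_measurable f).comp (measurable_snd.mul measurable_fst))]
      refine lintegral_congr_ae (hae.mono fun s hs => ?_)
      calc ∫⁻ u in Ioo (0:ℝ) 1, sbPhi f (u * s)
          = ∫⁻ u in Ioo (0:ℝ) 1, sbPhi f (s * u) := by
            refine lintegral_congr fun u => by rw [mul_comm]
        _ = (ENNReal.ofReal s)⁻¹ * ∫⁻ v in Ioo (0:ℝ) s, sbPhi f v :=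
            sb_scale (sbPhi f) (sbPhi_measurable f) s hs
    rw [A3, A1, A2, ← lintegral_add_left (f := fun s => (ENNReal.ofReal s)⁻¹ * ∫⁻ t in Ioc (0:ℝ) s, f t) (hminv.mul hmB)]
    exact lintegral_congr_ae (hae.mono fun s hs => sbPhi_key f hf hs)
  -- telescoping
  have htel : ∀ N : ℕ, sbPhi f T
      = (∑ n ∈ Finset.range N, ∫⁻ ω, f (lam (n + 1) ω) ∂μ) + ∫⁻ ω, sbPhi f (L N ω) ∂μ := by
    intro N
    induction N with
    | zero =>
      have : (fun ω => sbPhi f (L 0 ω)) = fun _ => sbPhi f T := funext fun ω => by rw [hL0]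
      simp [this, lintegral_const]
    | succ k ih =>
      rw [Finset.sum_range_succ, ih, key k, add_assoc]
  -- expectation of L N
  have hEL : ∀ N : ℕ, ∫⁻ ω, ENNReal.ofReal (L N ω) ∂μ
      = (ENNReal.ofReal (1/2)) ^ N * ENNReal.ofReal T := by
    intro N
    induction N with
    | zero =>
      have : (fun ω => ENNReal.ofReal (L 0 ω)) = fun _ => ENNReal.ofReal T :=
        funext fun ω => by rw [hL0]
      simp [this, lintegral_const]
    | succ k ih =>
      have h1 : ∀ ω, ENNReal.ofReal (L (k + 1) ω)
          = (fun p : ℝ × ℝ => ENNReal.ofReal (p.2 * p.1)) (L k ω, U (k + 1) ω) := by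
        intro ω; simp only; rw [hL k ω]
      have hJ : ∫⁻ u in Ioo (0:ℝ) 1, ENNReal.ofReal u = ENNReal.ofReal (1/2) := by
        have hint : IntegrableOn (fun u : ℝ => u) (Ioo (0:ℝ) 1) := by
          have := intervalIntegral.intervalIntegrable_id (μ := volume) (a := (0:ℝ)) (b := 1)
          rw [intervalIntegrable_iff_integrableOn_Ioo_of_le zero_le_one] at this
          exact this
        rw [← ofReal_integral_eq_lintegral_ofReal hint
          ((ae_restrict_iff' measurableSet_Ioo).2 (Filter.Eventually.of_forall
            fun u hu => hu.1.le))]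
        congr 1
        rw [setIntegral_congr_set (Ioo_ae_eq_Ioc (a := (0:ℝ)) (b := 1)),
          ← intervalIntegral.integral_of_le zero_le_one, integral_id]
        norm_num
      rw [lintegral_congr h1,
        sb_law μ T U L hUmeas hUindep hUunif hL0 hL k
          (fun p : ℝ × ℝ => ENNReal.ofReal (p.2 * p.1))
          (ENNReal.measurable_ofReal.comp (measurable_snd.mul measurable_fst))]
      have hinner : ∀ᵐ s ∂(μ.map (L k)), (∫⁻ u in Ioo (0:ℝ) 1, ENNReal.ofReal (u * s))
          = ENNReal.ofReal (1/2) * ENNReal.ofReal s := by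
        refine Filter.Eventually.of_forall fun s => ?_
        have hcongr : ∀ u ∈ Ioo (0:ℝ) 1, ENNReal.ofReal (u * s)
            = ENNReal.ofReal u * ENNReal.ofReal s :=
          fun u hu => ENNReal.ofReal_mul hu.1.le
        rw [setLIntegral_congr_fun measurableSet_Ioo hcongr,
          lintegral_mul_const _ ENNReal.measurable_ofReal, hJ]
      rw [lintegral_congr_ae hinner,
        lintegral_const_mul _ ENNReal.measurable_ofReal,
        lintegral_map ENNReal.measurable_ofReal (hLmeas k), ih, pow_succ]
      ring
  -- remainder bound and conclusion
  set a : ℕ → ℝ≥0∞ := fun n => ∫⁻ ω, f (lam (n + 1) ω) ∂μ with ha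
  set q := ENNReal.ofReal (1/2) with hq
  set C := m * (ENNReal.ofReal ε)⁻¹ * ENNReal.ofReal T with hC
  have hRle : ∀ N : ℕ, (∫⁻ ω, sbPhi f (L N ω) ∂μ) ≤ C * q ^ N := by
    intro N
    calc ∫⁻ ω, sbPhi f (L N ω) ∂μ
        ≤ ∫⁻ ω, m * (ENNReal.ofReal ε)⁻¹ * ENNReal.ofReal (L N ω) ∂μ :=
          lintegral_mono fun ω => sbPhi_le f m ε hfm hf0 (L N ω)
      _ = m * (ENNReal.ofReal ε)⁻¹ * (q ^ N * ENNReal.ofReal T) := by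
          rw [lintegral_const_mul _ (hLmeas N).ennreal_ofReal, hEL N]
      _ = C * q ^ N := by rw [hC]; ring
  have hCne : C ≠ ∞ := by
    rw [hC]
    exact ENNReal.mul_ne_top
      (ENNReal.mul_ne_top hm (ENNReal.inv_ne_top.2 (ENNReal.ofReal_pos.2 hε).ne'))
      ENNReal.ofReal_ne_top
  have hq1 : q < 1 := by rw [hq]; exact ENNReal.ofReal_lt_one.2 (by norm_num)
  have hq0 : Filter.Tendsto (fun N : ℕ => C * q ^ N) Filter.atTop (nhds 0) := by
    have h1 := ENNReal.tendsto_pow_atTop_nhds_zero_of_lt_one hq1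
    have h2 := ENNReal.Tendsto.const_mul h1 (Or.inr hCne)
    simpa using h2
  have hR0 : Filter.Tendsto (fun N : ℕ => ∫⁻ ω, sbPhi f (L N ω) ∂μ) Filter.atTop (nhds 0) :=
    tendsto_of_tendsto_of_tendsto_of_le_of_le tendsto_const_nhds hq0
      (fun N => zero_le) hRle
  have hP : Filter.Tendsto (fun N => ∑ n ∈ Finset.range N, a n) Filter.atTop
      (nhds (∑' n, a n)) := ENNReal.tendsto_nat_tsum a
  have hadd := hP.add hR0
  rw [add_zero] at hadd
  have heq : (fun N => (∑ n ∈ Finset.range N, a n) + ∫⁻ ω, sbPhi f (L N ω) ∂μ)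
      = fun _ => sbPhi f T := funext fun N => (htel N).symm
  rw [heq] at hadd
  exact tendsto_nhds_unique hadd tendsto_const_nhds

/-- For a uniform stick-breaking process `(λ_n)` on `[0,T]` (`L_0 = T`,
`L_n = U_n·L_{n-1}`, `λ_n = L_{n-1} - L_n` with `(U_n)` i.i.d. `U(0,1)`) and any
measurable `f : ℝ → [0,∞]`, `Σ_{n≥1} E[f(λ_n)] = ∫_0^T f(t)/t dt`. -/
theorem stmt_8 {Ω : Type*} [MeasurableSpace Ω] (μ : Measure Ω) [IsProbabilityMeasure μ]
    (T : ℝ) (hT : 0 < T)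
    (U : ℕ → Ω → ℝ) (hUmeas : ∀ n, Measurable (U n))
    (hUindep : iIndepFun U μ)
    (hUunif : ∀ n, μ.map (U n) = volume.restrict (Set.Ioo (0 : ℝ) 1))
    (L : ℕ → Ω → ℝ) (hL0 : ∀ ω, L 0 ω = T)
    (hL : ∀ n ω, L (n + 1) ω = U (n + 1) ω * L n ω)
    (lam : ℕ → Ω → ℝ) (hlam : ∀ n ω, lam (n + 1) ω = L n ω - L (n + 1) ω)
    (f : ℝ → ℝ≥0∞) (hf : Measurable f) :
    ∑' n : ℕ, ∫⁻ ω, f (lam (n + 1) ω) ∂μ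
      = ∫⁻ t in Set.Ioc (0 : ℝ) T, f t / ENNReal.ofReal t := by
  classical
  set fk : ℕ → ℝ → ℝ≥0∞ :=
    fun k t => (Ioi (((k : ℝ) + 1)⁻¹)).indicator (fun t => min (f t) k) t with hfk_def
  have hfk_meas : ∀ k, Measurable (fk k) :=
    fun k => (hf.min measurable_const).indicator measurableSet_Ioi
  have hfk_mono : Monotone fk := by
    intro i j hij t
    by_cases hi : ((i : ℝ) + 1)⁻¹ < t
    · have hj : ((j : ℝ) + 1)⁻¹ < t :=
        lt_of_le_of_lt (inv_anti₀ (by positivity) (by push_cast; norm_num; exact_mod_cast hij)) hi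
      simp only [hfk_def, indicator, mem_Ioi, hi, hj, if_true]
      exact min_le_min le_rfl (Nat.cast_le.2 hij)
    · simp [hfk_def, indicator, mem_Ioi, hi]
  have hfk_sup : ∀ t : ℝ, 0 < t → (⨆ k, fk k t) = f t := by
    intro t ht
    obtain ⟨K, hK⟩ := exists_nat_one_div_lt (K := ℝ) ht
    apply le_antisymm
    · refine iSup_le fun k => ?_
      by_cases h : ((k : ℝ) + 1)⁻¹ < t <;>
        simp [hfk_def, indicator, mem_Ioi, h, min_le_left]
    · have h1 : ∀ k : ℕ, fk (K + k) t = min (f t) ((K + k : ℕ) : ℝ≥0∞) := by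
        intro k
        have hlt : (((K + k : ℕ) : ℝ) + 1)⁻¹ < t := by
          have hKt : ((K : ℝ) + 1)⁻¹ < t := by rwa [one_div] at hK
          have h2 : (((K + k : ℕ) : ℝ) + 1)⁻¹ ≤ ((K : ℝ) + 1)⁻¹ :=
            inv_anti₀ (by positivity)
              (by push_cast; linarith [Nat.cast_nonneg (α := ℝ) k])
          linarith
        simp only [hfk_def, indicator, mem_Ioi]
        rw [if_pos hlt]
      have hsupc : (⨆ k : ℕ, ((K + k : ℕ) : ℝ≥0∞)) = ∞ := by
        apply top_unique
        rw [← ENNReal.iSup_natCast]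
        exact iSup_le fun n => le_iSup_of_le n (Nat.cast_le.2 (Nat.le_add_left n K))
      have h2 : f t = ⨆ k : ℕ, min (f t) ((K + k : ℕ) : ℝ≥0∞) := by
        calc f t = f t ⊓ ⊤ := by rw [inf_top_eq]
          _ = f t ⊓ ⨆ k : ℕ, ((K + k : ℕ) : ℝ≥0∞) := by rw [hsupc]
          _ = ⨆ k : ℕ, f t ⊓ ((K + k : ℕ) : ℝ≥0∞) := inf_iSup_eq _ _
          _ = ⨆ k : ℕ, min (f t) ((K + k : ℕ) : ℝ≥0∞) := rfl
      rw [h2]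
      refine iSup_le fun k => ?_
      rw [← h1 k]
      exact le_iSup (fun k => fk k t) (K + k)
  have hLmeas : ∀ n, Measurable (L n) := sb_L_meas T U L hUmeas hL0 hL
  have hlam_meas : ∀ n, Measurable (lam (n + 1)) := by
    intro n
    have : lam (n + 1) = fun ω => L n ω - L (n + 1) ω := funext (hlam n)
    rw [this]; exact (hLmeas n).sub (hLmeas (n + 1))
  have hlam_pos : ∀ n, ∀ᵐ ω ∂μ, 0 < lam (n + 1) ω := by
    intro n
    filter_upwards [sb_good μ U hUmeas hUunif] with ω hω
    have h1 := (sb_L_pos T hT U L hL0 hL ω hω n).1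
    obtain ⟨hu1, hu2⟩ := hω (n + 1)
    rw [hlam n ω, hL n ω]
    nlinarith
  calc ∑' n : ℕ, ∫⁻ ω, f (lam (n + 1) ω) ∂μ
      = ∑' n : ℕ, ⨆ k : ℕ, ∫⁻ ω, fk k (lam (n + 1) ω) ∂μ := by
        refine tsum_congr fun n => ?_
        rw [← lintegral_iSup (f := fun k ω => fk k (lam (n + 1) ω))
          (fun k => (hfk_meas k).comp (hlam_meas n))
          (fun i j hij ω => hfk_mono hij _)]
        exact lintegral_congr_ae ((hlam_pos n).mono fun ω hω =>
          (hfk_sup _ hω).symm)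
    _ = ⨆ k : ℕ, ∑' n : ℕ, ∫⁻ ω, fk k (lam (n + 1) ω) ∂μ := by
        rw [← lintegral_count]
        rw [lintegral_iSup (f := fun k n => ∫⁻ ω, fk k (lam (n + 1) ω) ∂μ)
          (fun k => measurable_from_nat)
          (fun i j hij n => lintegral_mono fun ω => hfk_mono hij _)]
        exact iSup_congr fun k => lintegral_count _
    _ = ⨆ k : ℕ, ∫⁻ t in Set.Ioc (0 : ℝ) T, fk k t / ENNReal.ofReal t := by
        refine iSup_congr fun k => ?_
        have hfm : ∀ t, fk k t ≤ (k : ℝ≥0∞) := by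
          intro t
          by_cases h : ((k : ℝ) + 1)⁻¹ < t <;>
            simp [hfk_def, indicator, mem_Ioi, h, min_le_right]
        have hf0 : ∀ t, t ≤ ((k : ℝ) + 1)⁻¹ → fk k t = 0 := by
          intro t hle
          simp [hfk_def, indicator, mem_Ioi, not_lt.2 hle]
        exact sb_core μ T hT U hUmeas hUindep hUunif L hL0 hL lam hlam (fk k)
          (hfk_meas k) (((k : ℝ) + 1)⁻¹) (by positivity) (k : ℝ≥0∞)
          (ENNReal.natCast_ne_top k) hfm hf0
    _ = ∫⁻ t in Set.Ioc (0 : ℝ) T, f t / ENNReal.ofReal t := by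
        rw [← lintegral_iSup (f := fun k t => fk k t / ENNReal.ofReal t) (fun k => (hfk_meas k).div ENNReal.measurable_ofReal)
          (fun i j hij t => ENNReal.div_le_div_right (hfk_mono hij t) _)]
        refine setLIntegral_congr_fun measurableSet_Ioc ?_
        intro t ht
        beta_reduce
        rw [← ENNReal.iSup_div, hfk_sup t ht.1]
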